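/- For all a, b, u, v ∈ ℂ such that a, b, a+b, u, v, u−v, u−a, v−b, u−v−a, v−u−b, u−a−b, v−a−b ∉ Λ, the following identity holds: w(a;u−v) · e^{−(ζ(u−v) − ζ(u) + ζ(v)) a} · w(a+b;v) + w(b;v−u) · e^{−(ζ(v−u) − ζ(v) + ζ(u)) b} · w(a+b;u) = w(a;u) · w(b;v). -/

import Mathlib

open scoped Classical

noncomputable section

/-- The rank-2 lattice `Λ = ℤω₁ + ℤω₂ ⊂ ℂ`. -/
def LatticeOf (ω₁ ω₂ : ℂ) : Set ℂ :=
  {z | ∃ m l : ℤ, z = (m : ℂ) * ω₁ + (l : ℂ) * ω₂}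

/-- Krichever's function `w(x;u) = σ(u−x) e^{ζ(u)x} / (σ(u)σ(x))`. -/
def wK (sig zet : ℂ → ℂ) (x u : ℂ) : ℂ :=
  sig (u - x) * Complex.exp (zet u * x) / (sig u * sig x)

namespace WP
variable {ω₁ ω₂ : ℂ}

lemma lat_zero : (0:ℂ) ∈ LatticeOf ω₁ ω₂ := ⟨0, 0, by simp⟩

lemma lat_add {x y : ℂ} (hx : x ∈ LatticeOf ω₁ ω₂) (hy : y ∈ LatticeOf ω₁ ω₂) :
    x + y ∈ LatticeOf ω₁ ω₂ := by
  obtain ⟨m, l, rfl⟩ := hx; obtain ⟨m', l', rfl⟩ := hy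
  exact ⟨m + m', l + l', by push_cast; ring⟩

lemma lat_neg {x : ℂ} (hx : x ∈ LatticeOf ω₁ ω₂) : -x ∈ LatticeOf ω₁ ω₂ := by
  obtain ⟨m, l, rfl⟩ := hx
  exact ⟨-m, -l, by push_cast; ring⟩

lemma lat_neg_iff {x : ℂ} : -x ∈ LatticeOf ω₁ ω₂ ↔ x ∈ LatticeOf ω₁ ω₂ :=
  ⟨fun h => by simpa using lat_neg h, lat_neg⟩

lemma lat_sub {x y : ℂ} (hx : x ∈ LatticeOf ω₁ ω₂) (hy : y ∈ LatticeOf ω₁ ω₂) :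
    x - y ∈ LatticeOf ω₁ ω₂ := by
  rw [sub_eq_add_neg]; exact lat_add hx (lat_neg hy)

lemma lat_mem_omega₁ : ω₁ ∈ LatticeOf ω₁ ω₂ := ⟨1, 0, by simp⟩
lemma lat_mem_omega₂ : ω₂ ∈ LatticeOf ω₁ ω₂ := ⟨0, 1, by simp⟩

lemma lat_add_iff {x y : ℂ} (hy : y ∈ LatticeOf ω₁ ω₂) :
    x + y ∈ LatticeOf ω₁ ω₂ ↔ x ∈ LatticeOf ω₁ ω₂ := by
  constructor
  · intro h; simpa using lat_sub h hy
  · intro h; exact lat_add h hy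

lemma lat_countable : (LatticeOf ω₁ ω₂).Countable := by
  have : LatticeOf ω₁ ω₂ ⊆ Set.range (fun p : ℤ × ℤ => (p.1 : ℂ) * ω₁ + (p.2 : ℂ) * ω₂) := by
    rintro z ⟨m, l, rfl⟩; exact ⟨⟨m, l⟩, rfl⟩
  exact (Set.countable_range _).mono this


lemma basis_exists (hω : LinearIndependent ℝ ![ω₁, ω₂]) :
    ∃ b : Module.Basis (Fin 2) ℝ ℂ, b 0 = ω₁ ∧ b 1 = ω₂ := by
  have hcard : Fintype.card (Fin 2) = Module.finrank ℝ ℂ := by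
    simp [Complex.finrank_real_complex]
  refine ⟨basisOfLinearIndependentOfCardEqFinrank hω hcard, ?_, ?_⟩ <;>
    simp [coe_basisOfLinearIndependentOfCardEqFinrank]

lemma gap_lemma (hω : LinearIndependent ℝ ![ω₁, ω₂]) :
    ∃ δ > 0, ∀ z ∈ LatticeOf ω₁ ω₂, z ≠ 0 → δ ≤ ‖z‖ := by
  obtain ⟨b, hb0, hb1⟩ := basis_exists hω
  set e : ℂ →ₗ[ℝ] (Fin 2 → ℝ) := b.equivFun.toLinearMap
  have hec : Continuous e := e.continuous_of_finiteDimensional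
  obtain ⟨C, hC0, hC⟩ : ∃ C > 0, ∀ z : ℂ, ‖e z‖ ≤ C * ‖z‖ := by
    refine ⟨‖e.toContinuousLinearMap‖ + 1, by positivity, fun z => ?_⟩
    calc ‖e z‖ = ‖e.toContinuousLinearMap z‖ := rfl
    _ ≤ ‖e.toContinuousLinearMap‖ * ‖z‖ := e.toContinuousLinearMap.le_opNorm z
    _ ≤ (‖e.toContinuousLinearMap‖ + 1) * ‖z‖ := by nlinarith [norm_nonneg z]
  refine ⟨1 / C, by positivity, ?_⟩
  rintro z ⟨m, l, rfl⟩ hz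
  set z := (m : ℂ) * ω₁ + (l : ℂ) * ω₂
  have hez : ∀ i, e z i = ![(m:ℝ), (l:ℝ)] i := by
    have hz' : z = (m:ℝ) • b 0 + (l:ℝ) • b 1 := by
      rw [hb0, hb1, Complex.real_smul, Complex.real_smul]; push_cast; ring
    intro i
    rw [show e z = b.equivFun z from rfl, Module.Basis.equivFun_apply, hz']
    simp only [map_add, map_smul, Module.Basis.repr_self]
    fin_cases i <;> simp [Finsupp.single_apply]
  have hml : m ≠ 0 ∨ l ≠ 0 := by
    by_contra h
    push_neg at h
    apply hz
    simp [z, h.1, h.2]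
  have h1 : (1:ℝ) ≤ ‖e z‖ := by
    rcases hml with h | h
    · calc (1:ℝ) ≤ |(m:ℝ)| := by exact_mod_cast Int.one_le_abs h
      _ = ‖e z 0‖ := by rw [hez]; simp [Real.norm_eq_abs]
      _ ≤ ‖e z‖ := norm_le_pi_norm _ 0
    · calc (1:ℝ) ≤ |(l:ℝ)| := by exact_mod_cast Int.one_le_abs h
      _ = ‖e z 1‖ := by rw [hez]; simp [Real.norm_eq_abs]
      _ ≤ ‖e z‖ := norm_le_pi_norm _ 1
  have := hC z
  rw [div_le_iff₀ hC0]
  nlinarith [norm_nonneg z]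

lemma translate_isolated (hω : LinearIndependent ℝ ![ω₁, ω₂]) (c w : ℂ) :
    ∃ ε > 0, ∀ z : ℂ, dist z w < ε → z - c ∈ LatticeOf ω₁ ω₂ → w - c ∈ LatticeOf ω₁ ω₂ → z = w := by
  obtain ⟨δ, hδ0, hδ⟩ := gap_lemma hω
  refine ⟨δ, hδ0, fun z hzd hz hw => ?_⟩
  by_contra hne
  have hmem : z - w ∈ LatticeOf ω₁ ω₂ := by
    have := lat_sub hz hw; simpa [sub_sub_sub_cancel_right] using this
  have := hδ _ hmem (sub_ne_zero.2 hne)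
  rw [dist_eq_norm] at hzd
  linarith

lemma translate_closed (hω : LinearIndependent ℝ ![ω₁, ω₂]) {c w : ℂ}
    (hw : w - c ∉ LatticeOf ω₁ ω₂) :
    ∃ ε > 0, ∀ z : ℂ, dist z w < ε → z - c ∉ LatticeOf ω₁ ω₂ := by
  obtain ⟨δ, hδ0, hδ⟩ := gap_lemma hω
  by_cases h : ∃ z₀ : ℂ, dist z₀ w < δ / 2 ∧ z₀ - c ∈ LatticeOf ω₁ ω₂
  · obtain ⟨z₀, hz₀d, hz₀⟩ := h
    have hz₀w : z₀ ≠ w := fun h => hw (h ▸ hz₀)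
    refine ⟨min (δ / 2) (dist z₀ w), by
      have := dist_pos.2 hz₀w; positivity, fun z hzd hz => ?_⟩
    have h1 : dist z w < δ / 2 := lt_of_lt_of_le hzd (min_le_left _ _)
    have h2 : z = z₀ := by
      by_contra hne
      have hmem : z - z₀ ∈ LatticeOf ω₁ ω₂ := by
        have := lat_sub hz hz₀; simpa [sub_sub_sub_cancel_right] using this
      have := hδ _ hmem (sub_ne_zero.2 hne)
      have : δ ≤ dist z z₀ := by rwa [dist_eq_norm]
      have := dist_triangle_right z z₀ w
      linarith
    rw [h2] at hzd
    exact absurd hzd (not_lt.2 (min_le_right _ _))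
  · push_neg at h
    exact ⟨δ / 2, by positivity, fun z hzd hz => absurd hz (h z hzd)⟩

lemma lat_not_mem_nhds (hω : LinearIndependent ℝ ![ω₁, ω₂]) {w : ℂ}
    (hw : w ∉ LatticeOf ω₁ ω₂) : ∀ᶠ z in nhds w, z ∉ LatticeOf ω₁ ω₂ := by
  obtain ⟨ε, hε0, hε⟩ := translate_closed hω (c := 0) (by simpa using hw)
  filter_upwards [Metric.ball_mem_nhds w hε0] with z hz
  simpa using hε z hz

lemma lat_compl_open (hω : LinearIndependent ℝ ![ω₁, ω₂]) :
    IsOpen (LatticeOf ω₁ ω₂)ᶜ := by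
  rw [isOpen_iff_mem_nhds]
  intro w hw
  exact (lat_not_mem_nhds hω hw).mono fun z hz => hz

lemma lat_dense_compl : Dense (LatticeOf ω₁ ω₂)ᶜ :=
  (lat_countable (ω₁ := ω₁) (ω₂ := ω₂)).dense_compl ℂ

lemma lat_reduction (hω : LinearIndependent ℝ ![ω₁, ω₂]) :
    ∃ R > 0, ∀ u : ℂ, ∃ l ∈ LatticeOf ω₁ ω₂, ‖u - l‖ ≤ R := by
  obtain ⟨b, hb0, hb1⟩ := basis_exists hω
  set e : (Fin 2 → ℝ) →ₗ[ℝ] ℂ := b.equivFun.symm.toLinearMap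
  obtain ⟨C, hC0, hC⟩ : ∃ C > 0, ∀ x : Fin 2 → ℝ, ‖e x‖ ≤ C * ‖x‖ := by
    refine ⟨‖e.toContinuousLinearMap‖ + 1, by positivity, fun z => ?_⟩
    calc ‖e z‖ = ‖e.toContinuousLinearMap z‖ := rfl
    _ ≤ ‖e.toContinuousLinearMap‖ * ‖z‖ := e.toContinuousLinearMap.le_opNorm z
    _ ≤ (‖e.toContinuousLinearMap‖ + 1) * ‖z‖ := by nlinarith [norm_nonneg z]
  refine ⟨C, hC0, fun u => ?_⟩
  set x : Fin 2 → ℝ := b.equivFun u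
  set m : ℤ := ⌊x 0⌋
  set l : ℤ := ⌊x 1⌋
  refine ⟨(m : ℂ) * ω₁ + (l : ℂ) * ω₂, ⟨m, l, rfl⟩, ?_⟩
  have hrepr : u - ((m : ℂ) * ω₁ + (l : ℂ) * ω₂) =
      e (fun i => x i - ![(m:ℝ), (l:ℝ)] i) := by
    have h1 : u = e x := (b.equivFun.symm_apply_apply u).symm
    have h2 : (m : ℂ) * ω₁ + (l : ℂ) * ω₂ = e ![(m:ℝ), (l:ℝ)] := by
      have : e ![(m:ℝ), (l:ℝ)] = (m:ℝ) • b 0 + (l:ℝ) • b 1 := by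
        rw [show e ![(m:ℝ), (l:ℝ)] = b.equivFun.symm ![(m:ℝ), (l:ℝ)] from rfl,
          Module.Basis.equivFun_symm_apply]
        simp [Fin.sum_univ_two]
      rw [this, hb0, hb1, Complex.real_smul, Complex.real_smul]
      push_cast; ring
    rw [h1, h2, ← map_sub]
    congr 1
  rw [hrepr]
  calc ‖e (fun i => x i - ![(m:ℝ), (l:ℝ)] i)‖ ≤ C * ‖(fun i => x i - ![(m:ℝ), (l:ℝ)] i)‖ := hC _
  _ ≤ C * 1 := by
      gcongr
      refine (pi_norm_le_iff_of_nonneg zero_le_one).2 fun i => ?_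
      have h0 : |x 0 - ((⌊x 0⌋ : ℤ) : ℝ)| ≤ 1 := by
        rw [abs_le]
        constructor
        · linarith [Int.floor_le (x 0)]
        · linarith [Int.lt_floor_add_one (x 0)]
      have h1 : |x 1 - ((⌊x 1⌋ : ℤ) : ℝ)| ≤ 1 := by
        rw [abs_le]
        constructor
        · linarith [Int.floor_le (x 1)]
        · linarith [Int.lt_floor_add_one (x 1)]
      fin_cases i
      · simpa [Real.norm_eq_abs, m] using h0
      · simpa [Real.norm_eq_abs, l] using h1
  _ = C := mul_one C

section Helpers
variable {ω₁ ω₂ : ℂ}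

/-- Periodicity under generators extends to the lattice. -/
lemma per_lattice {f : ℂ → ℂ} (h₁ : ∀ z, f (z + ω₁) = f z) (h₂ : ∀ z, f (z + ω₂) = f z) :
    ∀ l ∈ LatticeOf ω₁ ω₂, ∀ z, f (z + l) = f z := by
  have key : ∀ (ω : ℂ), (∀ z, f (z + ω) = f z) → ∀ (n : ℤ) (z), f (z + (n : ℂ) * ω) = f z := by
    intro ω hper n
    induction n using Int.induction_on with
    | zero => simp
    | succ k ih =>
        intro z
        push_cast
        rw [show z + ((k : ℂ) + 1) * ω = z + (k : ℂ) * ω + ω by ring, hper]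
        have := ih z; push_cast at this; exact this
    | pred k ih =>
        intro z
        push_cast
        have h1 := hper (z + (-(k:ℂ) - 1) * ω)
        rw [show z + (-(k:ℂ) - 1) * ω + ω = z + -(k:ℂ) * ω by ring] at h1
        have h2 := ih z
        push_cast at h2
        rw [← h1]
        exact h2
  rintro l ⟨m, n, rfl⟩ z
  rw [show z + ((m : ℂ) * ω₁ + (n : ℂ) * ω₂) = z + (m : ℂ) * ω₁ + (n : ℂ) * ω₂ by ring,
    key ω₂ h₂ n, key ω₁ h₁ m]

/-- Zero-set propagation for quasi-periodic functions. -/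
lemma zero_prop {f : ℂ → ℂ}
    (h₁ : ∀ z, ∃ c : ℂ, c ≠ 0 ∧ f (z + ω₁) = c * f z)
    (h₂ : ∀ z, ∃ c : ℂ, c ≠ 0 ∧ f (z + ω₂) = c * f z) :
    ∀ l ∈ LatticeOf ω₁ ω₂, ∀ z, (f (z + l) = 0 ↔ f z = 0) := by
  have key : ∀ (ω : ℂ), (∀ z, ∃ c : ℂ, c ≠ 0 ∧ f (z + ω) = c * f z) →
      ∀ (n : ℤ) (z), (f (z + (n : ℂ) * ω) = 0 ↔ f z = 0) := by
    intro ω hper n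
    have step : ∀ z, (f (z + ω) = 0 ↔ f z = 0) := by
      intro z; obtain ⟨c, hc, h⟩ := hper z
      rw [h, mul_eq_zero]; simp [hc]
    induction n using Int.induction_on with
    | zero => simp
    | succ k ih =>
        intro z
        push_cast
        rw [show z + ((k : ℂ) + 1) * ω = z + (k : ℂ) * ω + ω by ring, step]
        have := ih z; push_cast at this; exact this
    | pred k ih =>
        intro z
        push_cast
        have h1 := step (z + (-(k:ℂ) - 1) * ω)
        rw [show z + (-(k:ℂ) - 1) * ω + ω = z + -(k:ℂ) * ω by ring] at h1
        have h2 := ih z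
        push_cast at h2
        exact h1.symm.trans h2
  rintro l ⟨m, n, rfl⟩ z
  rw [show z + ((m : ℂ) * ω₁ + (n : ℂ) * ω₂) = z + (m : ℂ) * ω₁ + (n : ℂ) * ω₂ by ring,
    key ω₂ h₂ n, key ω₁ h₁ m]

/-- A function with vanishing derivative off the lattice is constant off the lattice. -/
lemma const_off_lattice (hω : LinearIndependent ℝ ![ω₁, ω₂]) {f : ℂ → ℂ}
    (hd : ∀ z ∉ LatticeOf ω₁ ω₂, HasDerivAt f 0 z) :
    ∀ x ∉ LatticeOf ω₁ ω₂, ∀ y ∉ LatticeOf ω₁ ω₂, f x = f y := by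
  intro x hx y hy
  set U : Set ℂ := (LatticeOf ω₁ ω₂)ᶜ
  have hUo : IsOpen U := lat_compl_open hω
  have hUc : IsPreconnected U :=
    ((lat_countable).isPathConnected_compl_of_one_lt_rank
      (by rw [Complex.rank_real_complex]; norm_num)).isConnected.isPreconnected
  have hdiff : DifferentiableOn ℂ f U := fun z hz => ((hd z hz).differentiableAt).differentiableWithinAt
  have hf : AnalyticOnNhd ℂ f U := hdiff.analyticOnNhd hUo
  have hg : AnalyticOnNhd ℂ (fun _ => f x) U := fun z _ => analyticAt_const
  have hfg : f =ᶠ[nhds x] (fun _ => f x) := by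
    obtain ⟨ε, hε0, hε⟩ := Metric.isOpen_iff.1 hUo x hx
    have hball : ∀ y' ∈ Metric.ball x ε, f y' = f x := by
      intro y' hy'
      have hconv : Convex ℝ (Metric.ball x ε) := convex_ball x ε
      refine hconv.is_const_of_fderivWithin_eq_zero
        (fun z hz => ((hd z (hε hz)).differentiableAt).differentiableWithinAt) ?_ hy'
        (Metric.mem_ball_self hε0)
      intro z hz
      rw [fderivWithin_of_isOpen Metric.isOpen_ball hz]
      have := ((hd z (hε hz)).hasFDerivAt).fderiv
      rw [this]
      exact ContinuousLinearMap.ext fun w => by simp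
    filter_upwards [Metric.ball_mem_nhds x hε0] with z hz
    exact hball z hz
  exact (hf.eqOn_of_preconnected_of_eventuallyEq hg hUc hx hfg hy).symm

/-- A continuous lattice-periodic function is constant if entire. -/
lemma periodic_entire_const (hω : LinearIndependent ℝ ![ω₁, ω₂]) {f : ℂ → ℂ}
    (hd : Differentiable ℂ f)
    (hper : ∀ l ∈ LatticeOf ω₁ ω₂, ∀ z, f (z + l) = f z) :
    ∀ z w : ℂ, f z = f w := by
  obtain ⟨R, hR0, hR⟩ := lat_reduction hω
  have hbd : Bornology.IsBounded (Set.range f) := by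
    have hsub : Set.range f ⊆ f '' Metric.closedBall 0 R := by
      rintro _ ⟨u, rfl⟩
      obtain ⟨l, hl, hul⟩ := hR u
      refine ⟨u - l, by simpa [Metric.mem_closedBall, dist_eq_norm] using hul, ?_⟩
      have := hper l hl (u - l)
      rw [show u - l + l = u from by ring] at this
      exact this.symm
    exact (((isCompact_closedBall (0:ℂ) R).image hd.continuous).isBounded).subset hsub
  intro z w
  exact hd.apply_eq_apply_of_bounded hbd z w

end Helpers

/-- Bundled hypotheses of the problem. -/
structure WData (ω₁ ω₂ : ℂ) (sig zet pe : ℂ → ℂ) : Prop where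
  hω : LinearIndependent ℝ ![ω₁, ω₂]
  hpe_diff : DifferentiableOn ℂ pe (LatticeOf ω₁ ω₂)ᶜ
  hpe_per₁ : ∀ z : ℂ, pe (z + ω₁) = pe z
  hpe_per₂ : ∀ z : ℂ, pe (z + ω₂) = pe z
  hpe_zero : Filter.Tendsto (fun z : ℂ => pe z - 1 / z ^ 2) (nhdsWithin 0 {(0:ℂ)}ᶜ) (nhds 0)
  hzet_deriv : ∀ z ∉ LatticeOf ω₁ ω₂, HasDerivAt zet (-pe z) z
  hzet_zero : Filter.Tendsto (fun z : ℂ => zet z - 1 / z) (nhdsWithin 0 {(0:ℂ)}ᶜ) (nhds 0)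
  hsig_diff : Differentiable ℂ sig
  hsig_zero : ∀ z : ℂ, sig z = 0 ↔ z ∈ LatticeOf ω₁ ω₂
  hsig_deriv : ∀ z ∉ LatticeOf ω₁ ω₂, HasDerivAt sig (zet z * sig z) z
  hsig_one : Filter.Tendsto (fun z : ℂ => sig z / z) (nhdsWithin 0 {(0:ℂ)}ᶜ) (nhds 1)

section Main
variable {ω₁ ω₂ : ℂ} {sig zet pe : ℂ → ℂ} (W : WData ω₁ ω₂ sig zet pe)
include W

lemma WData.sig0 : sig 0 = 0 := (W.hsig_zero 0).2 lat_zero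

lemma WData.sig_ne {z : ℂ} (hz : z ∉ LatticeOf ω₁ ω₂) : sig z ≠ 0 :=
  fun h => hz ((W.hsig_zero z).1 h)

omit W in
lemma neg_tendsto_punctured : Filter.Tendsto (fun z : ℂ => -z) (nhdsWithin 0 {(0:ℂ)}ᶜ) (nhdsWithin 0 {(0:ℂ)}ᶜ) := by
  rw [nhdsWithin, Filter.tendsto_inf]
  constructor
  · have h1 : Filter.Tendsto (fun z : ℂ => -z) (nhdsWithin 0 {(0:ℂ)}ᶜ) (nhds (-(0:ℂ))) :=
      (continuous_neg.tendsto (0:ℂ)).mono_left nhdsWithin_le_nhds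
    simpa [nhdsWithin] using h1
  · rw [Filter.tendsto_principal]
    filter_upwards [eventually_mem_nhdsWithin] with z hz
    simpa using hz

lemma WData.sig_deriv_zero : HasDerivAt sig 1 0 := by
  have hd : HasDerivAt sig (deriv sig 0) 0 := (W.hsig_diff 0).hasDerivAt
  have hslope := hasDerivAt_iff_tendsto_slope.1 hd
  have heq : ∀ z ∈ ({(0:ℂ)}ᶜ : Set ℂ), slope sig 0 z = sig z / z := by
    intro z hz
    rw [slope_def_field, W.sig0, sub_zero, sub_zero]
  have hslope' : Filter.Tendsto (fun z => sig z / z) (nhdsWithin 0 {(0:ℂ)}ᶜ) (nhds (deriv sig 0)) := by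
    refine hslope.congr' ?_
    filter_upwards [eventually_mem_nhdsWithin] with z hz using heq z hz
  have : deriv sig 0 = 1 := tendsto_nhds_unique hslope' W.hsig_one
  rwa [this] at hd

omit W in
lemma continuousAt_of_punctured {f : ℂ → ℂ} {c : ℂ}
    (h : Filter.Tendsto f (nhdsWithin c {c}ᶜ) (nhds (f c))) : ContinuousAt f c := by
  rw [ContinuousAt, ← nhdsNE_sup_pure c, Filter.tendsto_sup]
  exact ⟨h, tendsto_pure_nhds f c⟩

lemma WData.pe_per : ∀ l ∈ LatticeOf ω₁ ω₂, ∀ z, pe (z + l) = pe z :=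
  per_lattice W.hpe_per₁ W.hpe_per₂

lemma WData.pe_diffAt {z : ℂ} (hz : z ∉ LatticeOf ω₁ ω₂) : DifferentiableAt ℂ pe z :=
  W.hpe_diff.differentiableAt ((lat_compl_open W.hω).mem_nhds hz)

lemma WData.pe_even : ∀ z ∉ LatticeOf ω₁ ω₂, pe (-z) = pe z := by
  classical
  set g : ℂ → ℂ := fun z => if z ∈ LatticeOf ω₁ ω₂ then 0 else pe z - pe (-z) with hg
  have hgen : ∀ ω, ω ∈ LatticeOf ω₁ ω₂ → (∀ z, pe (z + ω) = pe z) → ∀ z, g (z + ω) = g z := by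
    intro ω hωmem hper z
    by_cases hz : z ∈ LatticeOf ω₁ ω₂
    · simp only [hg, if_pos hz, if_pos (lat_add hz hωmem)]
    · have hz' : z + ω ∉ LatticeOf ω₁ ω₂ := fun h => hz (by simpa using lat_sub h hωmem)
      simp only [hg, if_neg hz, if_neg hz']
      rw [hper z]
      have : pe (-(z + ω)) = pe (-z) := by
        have := W.pe_per (-ω) (lat_neg hωmem) (-z)
        rw [show -z + -ω = -(z + ω) by ring] at this
        exact this
      rw [this]
  have hper₁ : ∀ z, g (z + ω₁) = g z := hgen ω₁ lat_mem_omega₁ W.hpe_per₁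
  have hper₂ : ∀ z, g (z + ω₂) = g z := hgen ω₂ lat_mem_omega₂ W.hpe_per₂
  have hgper : ∀ l ∈ LatticeOf ω₁ ω₂, ∀ z, g (z + l) = g z := per_lattice hper₁ hper₂
  -- g is differentiable away from the lattice
  have hgdiff_off : ∀ z ∉ LatticeOf ω₁ ω₂, DifferentiableAt ℂ g z := by
    intro z hz
    have hev : ∀ᶠ w in nhds z, g w = pe w - pe (-w) := by
      filter_upwards [lat_not_mem_nhds W.hω hz] with w hw
      simp only [hg, if_neg hw]
    have hneg : DifferentiableAt ℂ (fun w => pe (-w)) z := by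
      have h1 : DifferentiableAt ℂ pe (-z) := W.pe_diffAt (fun h => hz (by simpa using lat_neg h))
      exact h1.comp z (differentiable_neg.differentiableAt)
    exact ((W.pe_diffAt hz).sub hneg).congr_of_eventuallyEq hev
  -- continuity of g at 0
  have hg0 : g 0 = 0 := by simp [hg, lat_zero]
  have htend0 : Filter.Tendsto g (nhdsWithin 0 {(0:ℂ)}ᶜ) (nhds 0) := by
    obtain ⟨ε, hε0, hε⟩ := translate_isolated W.hω 0 0
    have hev : ∀ᶠ z in nhdsWithin 0 {(0:ℂ)}ᶜ,
        g z = (pe z - 1 / z ^ 2) - (pe (-z) - 1 / (-z) ^ 2) := by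
      have hball : Metric.ball (0:ℂ) ε ∈ nhds (0:ℂ) := Metric.ball_mem_nhds 0 hε0
      filter_upwards [eventually_mem_nhdsWithin,
        Filter.eventually_inf_principal.2 (Filter.eventually_of_mem hball
          (fun z hz => by exact fun _ => hz))] with z hz hball'
      have hzball : z ∈ Metric.ball (0:ℂ) ε := hball'
      have hzne : z ≠ 0 := by simpa using hz
      have hznot : z ∉ LatticeOf ω₁ ω₂ := by
        intro hmem
        exact hzne (hε z (by simpa [dist_eq_norm] using hzball) (by simpa using hmem) (by simpa using lat_zero))
      simp only [hg, if_neg hznot]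
      have : (1:ℂ) / z ^ 2 = 1 / (-z) ^ 2 := by ring_nf
      rw [this]; ring
    have h2 : Filter.Tendsto (fun z : ℂ => pe (-z) - 1 / (-z) ^ 2) (nhdsWithin 0 {(0:ℂ)}ᶜ) (nhds 0) :=
      W.hpe_zero.comp (neg_tendsto_punctured)
    have := (W.hpe_zero.sub h2)
    rw [sub_zero] at this
    exact this.congr' (by filter_upwards [hev] with z hz using hz.symm)
  have hcont0 : ContinuousAt g 0 := continuousAt_of_punctured (by rw [hg0]; exact htend0)
  -- g is entire
  have hgdiff : Differentiable ℂ g := by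
    intro z
    by_cases hz : z ∈ LatticeOf ω₁ ω₂
    · -- reduce to 0 by periodicity
      have hshift : ∀ w, g w = g (w - z) := by
        intro w
        have := hgper z hz (w - z)
        rw [show w - z + z = w by ring] at this
        exact this
      have hd0 : DifferentiableAt ℂ g 0 := by
        obtain ⟨ε, hε0, hε⟩ := translate_isolated W.hω 0 0
        refine AnalyticAt.differentiableAt ?_
        refine Complex.analyticAt_of_differentiable_on_punctured_nhds_of_continuousAt ?_ hcont0
        have hball : Metric.ball (0:ℂ) ε ∈ nhds (0:ℂ) := Metric.ball_mem_nhds 0 hε0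
        filter_upwards [eventually_mem_nhdsWithin,
          Filter.eventually_inf_principal.2 (Filter.eventually_of_mem hball
            (fun w hw => by exact fun _ => hw))] with w hw hball'
        have hwball : w ∈ Metric.ball (0:ℂ) ε := hball'
        have hwne : w ≠ 0 := by simpa using hw
        have hwnot : w ∉ LatticeOf ω₁ ω₂ := by
          intro hmem
          exact hwne (hε w (by simpa [dist_eq_norm] using hwball) (by simpa using hmem) (by simpa using lat_zero))
        exact hgdiff_off w hwnot
      have hd0' : DifferentiableAt ℂ g (z - z) := by rwa [sub_self]
      have : DifferentiableAt ℂ (fun w => g (w - z)) z :=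
        DifferentiableAt.comp (𝕜 := ℂ) (g := g) (f := fun w => w - z) z hd0'
          (differentiableAt_id.sub_const z)
      exact this.congr_of_eventuallyEq (Filter.Eventually.of_forall hshift)
    · exact hgdiff_off z hz
  -- Liouville
  have hconst := periodic_entire_const W.hω hgdiff hgper
  intro z hz
  have := hconst z 0
  rw [hg0] at this
  simp only [hg, if_neg hz] at this
  have := sub_eq_zero.1 this
  exact this.symm

omit W in
lemma lat_neg_not {z : ℂ} (hz : z ∉ LatticeOf ω₁ ω₂) : -z ∉ LatticeOf ω₁ ω₂ :=
  fun h => hz (by simpa using lat_neg h)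

lemma WData.zet_odd : ∀ z ∉ LatticeOf ω₁ ω₂, zet (-z) = -zet z := by
  set f : ℂ → ℂ := fun z => zet z + zet (-z) with hf
  have hd : ∀ z ∉ LatticeOf ω₁ ω₂, HasDerivAt f 0 z := by
    intro z hz
    have h1 : HasDerivAt zet (-pe z) z := W.hzet_deriv z hz
    have h2 : HasDerivAt (fun w : ℂ => zet (-w)) (-pe (-z) * (-1)) z :=
      HasDerivAt.comp (𝕜 := ℂ) z (W.hzet_deriv (-z) (lat_neg_not hz)) (hasDerivAt_neg z)
    have h3 := h1.add h2
    have : -pe z + -pe (-z) * (-1) = 0 := by rw [W.pe_even z hz]; ring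
    rwa [this] at h3
  have hconst := const_off_lattice W.hω hd
  intro z hz
  have hlim : Filter.Tendsto f (nhdsWithin 0 {(0:ℂ)}ᶜ) (nhds 0) := by
    have h2 : Filter.Tendsto (fun w : ℂ => zet (-w) - 1 / (-w)) (nhdsWithin 0 {(0:ℂ)}ᶜ) (nhds 0) :=
      W.hzet_zero.comp neg_tendsto_punctured
    have h3 := W.hzet_zero.add h2
    rw [add_zero] at h3
    refine h3.congr' ?_
    filter_upwards [eventually_mem_nhdsWithin] with w hw
    simp only [hf]
    have : (1:ℂ) / (-w) = -(1/w) := by ring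
    rw [this]
    ring
  have hfz : Filter.Tendsto f (nhdsWithin 0 {(0:ℂ)}ᶜ) (nhds (f z)) := by
    obtain ⟨ε, hε0, hε⟩ := translate_isolated W.hω 0 0
    have hev : ∀ᶠ w in nhdsWithin 0 {(0:ℂ)}ᶜ, f w = f z := by
      have hball : Metric.ball (0:ℂ) ε ∈ nhds (0:ℂ) := Metric.ball_mem_nhds 0 hε0
      filter_upwards [eventually_mem_nhdsWithin,
        Filter.eventually_inf_principal.2 (Filter.eventually_of_mem hball
          (fun w hw => by exact fun _ => hw))] with w hw hball'
      have hwne : w ≠ 0 := by simpa using hw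
      have hwnot : w ∉ LatticeOf ω₁ ω₂ := by
        intro hmem
        exact hwne (hε w (by simpa [dist_eq_norm] using hball')
          (by simpa using hmem) (by simpa using lat_zero))
      exact hconst w hwnot z hz
    exact Filter.Tendsto.congr' (by filter_upwards [hev] with w hw using hw.symm) tendsto_const_nhds
  have : f z = 0 := tendsto_nhds_unique hfz hlim
  have := this
  simp only [hf] at this
  linear_combination this

lemma WData.sig_odd : ∀ z : ℂ, sig (-z) = -sig z := by
  set F : ℂ → ℂ := fun z => sig (-z) * (sig z)⁻¹ with hF
  have hd : ∀ z ∉ LatticeOf ω₁ ω₂, HasDerivAt F 0 z := by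
    intro z hz
    have hzne := W.sig_ne hz
    have hA : HasDerivAt (fun w : ℂ => sig (-w)) (zet (-z) * sig (-z) * (-1)) z :=
      HasDerivAt.comp (𝕜 := ℂ) z (W.hsig_deriv (-z) (lat_neg_not hz)) (hasDerivAt_neg z)
    have hB : HasDerivAt (fun w : ℂ => (sig w)⁻¹) (-(zet z * sig z) / (sig z) ^ 2) z :=
      (W.hsig_deriv z hz).inv hzne
    have h3 := hA.mul hB
    have hval : zet (-z) * sig (-z) * (-1) * (sig z)⁻¹ +
        sig (-z) * (-(zet z * sig z) / sig z ^ 2) = 0 := by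
      rw [W.zet_odd z hz]
      field_simp
      ring
    rwa [hval] at h3
  have hconst := const_off_lattice W.hω hd
  have hFz : ∀ z ∉ LatticeOf ω₁ ω₂, F z = -1 := by
    intro z hz
    have hlim : Filter.Tendsto F (nhdsWithin 0 {(0:ℂ)}ᶜ) (nhds (-1)) := by
      have h1 : Filter.Tendsto (fun w : ℂ => sig (-w) / (-w)) (nhdsWithin 0 {(0:ℂ)}ᶜ) (nhds 1) :=
        W.hsig_one.comp neg_tendsto_punctured
      have h2 : Filter.Tendsto (fun w : ℂ => (sig w / w)⁻¹) (nhdsWithin 0 {(0:ℂ)}ᶜ) (nhds 1) := by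
        have := W.hsig_one.inv₀ one_ne_zero
        simpa using this
      have h3 := (h1.mul h2).neg
      rw [mul_one] at h3
      refine h3.congr' ?_
      obtain ⟨ε, hε0, hε⟩ := translate_isolated W.hω 0 0
      have hball : Metric.ball (0:ℂ) ε ∈ nhds (0:ℂ) := Metric.ball_mem_nhds 0 hε0
      filter_upwards [eventually_mem_nhdsWithin,
        Filter.eventually_inf_principal.2 (Filter.eventually_of_mem hball
          (fun w hw => by exact fun _ => hw))] with w hw hball'
      have hwne : w ≠ 0 := by simpa using hw
      have hwnot : w ∉ LatticeOf ω₁ ω₂ := by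
        intro hmem
        exact hwne (hε w (by simpa [dist_eq_norm] using hball')
          (by simpa using hmem) (by simpa using lat_zero))
      have hswne := W.sig_ne hwnot
      simp only [hF]
      field_simp
    have hFzlim : Filter.Tendsto F (nhdsWithin 0 {(0:ℂ)}ᶜ) (nhds (F z)) := by
      obtain ⟨ε, hε0, hε⟩ := translate_isolated W.hω 0 0
      have hball : Metric.ball (0:ℂ) ε ∈ nhds (0:ℂ) := Metric.ball_mem_nhds 0 hε0
      have hev : ∀ᶠ w in nhdsWithin 0 {(0:ℂ)}ᶜ, F w = F z := by
        filter_upwards [eventually_mem_nhdsWithin,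
          Filter.eventually_inf_principal.2 (Filter.eventually_of_mem hball
            (fun w hw => by exact fun _ => hw))] with w hw hball'
        have hwne : w ≠ 0 := by simpa using hw
        have hwnot : w ∉ LatticeOf ω₁ ω₂ := by
          intro hmem
          exact hwne (hε w (by simpa [dist_eq_norm] using hball')
            (by simpa using hmem) (by simpa using lat_zero))
        exact hconst w hwnot z hz
      exact Filter.Tendsto.congr' (by filter_upwards [hev] with w hw using hw.symm)
        tendsto_const_nhds
    exact tendsto_nhds_unique hFzlim hlim
  intro z
  by_cases hz : z ∈ LatticeOf ω₁ ω₂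
  · rw [(W.hsig_zero z).2 hz, (W.hsig_zero (-z)).2 (lat_neg hz), neg_zero]
  · have := hFz z hz
    simp only [hF] at this
    have hzne := W.sig_ne hz
    field_simp at this
    exact this

omit W in
lemma half_not_mem (hω : LinearIndependent ℝ ![ω₁, ω₂]) :
    ω₁ / 2 ∉ LatticeOf ω₁ ω₂ ∧ ω₂ / 2 ∉ LatticeOf ω₁ ω₂ := by
  constructor
  · rintro ⟨m, l, h⟩
    have h2 : ((m:ℝ) - 1/2) • ω₁ + (l:ℝ) • ω₂ = 0 := by
      rw [Complex.real_smul, Complex.real_smul]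
      push_cast
      linear_combination -h
    have := (LinearIndependent.pair_iff.1 hω _ _ h2).1
    have h3 : (2 * m : ℝ) = 1 := by linarith
    have h4 : (2 * m : ℤ) = 1 := by exact_mod_cast h3
    omega
  · rintro ⟨m, l, h⟩
    have h2 : (m:ℝ) • ω₁ + ((l:ℝ) - 1/2) • ω₂ = 0 := by
      rw [Complex.real_smul, Complex.real_smul]
      push_cast
      linear_combination -h
    have := (LinearIndependent.pair_iff.1 hω _ _ h2).2
    have h3 : (2 * l : ℝ) = 1 := by linarith
    have h4 : (2 * l : ℤ) = 1 := by exact_mod_cast h3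
    omega

lemma WData.eta_exists {ω : ℂ} (hmem : ω ∈ LatticeOf ω₁ ω₂) (hhalf : ω / 2 ∉ LatticeOf ω₁ ω₂)
    (hper : ∀ z, pe (z + ω) = pe z) :
    ∃ η : ℂ, ∀ z, sig (z + ω) = -Complex.exp (η * (z + ω / 2)) * sig z := by
  have hadd : ∀ z : ℂ, z + ω ∈ LatticeOf ω₁ ω₂ ↔ z ∈ LatticeOf ω₁ ω₂ :=
    fun z => lat_add_iff hmem
  -- ζ(z+ω) - ζ(z) is constant off the lattice
  set h : ℂ → ℂ := fun z => zet (z + ω) - zet z with hh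
  have hd : ∀ z ∉ LatticeOf ω₁ ω₂, HasDerivAt h 0 z := by
    intro z hz
    have h1 : HasDerivAt (fun w : ℂ => zet (w + ω)) (-pe (z + ω) * 1) z :=
      HasDerivAt.comp (𝕜 := ℂ) z (W.hzet_deriv (z + ω) fun hc => hz ((hadd z).1 hc))
        ((hasDerivAt_id z).add_const ω)
    have h2 := h1.sub (W.hzet_deriv z hz)
    have : -pe (z + ω) * 1 - -pe z = 0 := by rw [hper z]; ring
    rwa [this] at h2
  have hconst := const_off_lattice W.hω hd
  set η : ℂ := h (ω / 2) with hη
  have zper : ∀ z ∉ LatticeOf ω₁ ω₂, zet (z + ω) = zet z + η := by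
    intro z hz
    have := hconst z hz (ω / 2) hhalf
    simp only [hh] at this ⊢
    rw [hη]
    linear_combination this
  -- quasi-periodicity of σ off the lattice
  set Q : ℂ → ℂ := fun z => sig (z + ω) * Complex.exp (-(η * z)) * (sig z)⁻¹ with hQ
  have hQd : ∀ z ∉ LatticeOf ω₁ ω₂, HasDerivAt Q 0 z := by
    intro z hz
    have hzω : z + ω ∉ LatticeOf ω₁ ω₂ := fun hc => hz ((hadd z).1 hc)
    have h1 : HasDerivAt (fun w : ℂ => sig (w + ω)) (zet (z + ω) * sig (z + ω) * 1) z :=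
      HasDerivAt.comp (𝕜 := ℂ) z (W.hsig_deriv (z + ω) hzω) ((hasDerivAt_id z).add_const ω)
    have hlin : HasDerivAt (fun w : ℂ => -(η * w)) (-η) z := by
      have := ((hasDerivAt_id z).const_mul η).neg
      rw [mul_one] at this; exact this
    have h2 : HasDerivAt (fun w : ℂ => Complex.exp (-(η * w)))
        (Complex.exp (-(η * z)) * -η) z :=
      HasDerivAt.comp (𝕜 := ℂ) z (Complex.hasDerivAt_exp _) hlin
    have h3 : HasDerivAt (fun w : ℂ => (sig w)⁻¹) (-(zet z * sig z) / (sig z) ^ 2) z :=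
      (W.hsig_deriv z hz).inv (W.sig_ne hz)
    have h4 := (h1.mul h2).mul h3
    have hval : (zet (z + ω) * sig (z + ω) * 1 * Complex.exp (-(η * z)) +
          sig (z + ω) * (Complex.exp (-(η * z)) * -η)) * (sig z)⁻¹ +
          sig (z + ω) * Complex.exp (-(η * z)) * (-(zet z * sig z) / sig z ^ 2) = 0 := by
      rw [zper z hz]
      field_simp [W.sig_ne hz]
      ring
    simp only [Pi.mul_apply] at h4; rwa [hval] at h4
  have hQconst := const_off_lattice W.hω hQd
  have hhalfneg : -(ω / 2) ∉ LatticeOf ω₁ ω₂ := lat_neg_not hhalf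
  have hQval : Q (-(ω / 2)) = -Complex.exp (η * (ω / 2)) := by
    simp only [hQ]
    rw [show -(ω / 2) + ω = ω / 2 by ring, W.sig_odd (ω / 2)]
    have hne := W.sig_ne hhalf
    have harg : -(η * -(ω / 2)) = η * (ω / 2) := by ring
    rw [harg, inv_neg, mul_neg, mul_comm (sig (ω / 2)), mul_assoc, mul_inv_cancel₀ hne, mul_one]
  refine ⟨η, ?_⟩
  have hoff : ∀ z ∉ LatticeOf ω₁ ω₂, sig (z + ω) = -Complex.exp (η * (z + ω / 2)) * sig z := by
    intro z hz
    have h1 : Q z = -Complex.exp (η * (ω / 2)) := by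
      rw [← hQval]; exact hQconst z hz _ hhalfneg
    simp only [hQ] at h1
    have hne := W.sig_ne hz
    have e1 : Complex.exp (η * (z + ω / 2)) = Complex.exp (η * z) * Complex.exp (η * (ω / 2)) := by
      rw [← Complex.exp_add]; congr 1; ring
    have e2 : Complex.exp (-(η * z)) * Complex.exp (η * z) = 1 := by
      rw [← Complex.exp_add]; simp
    have e3 : (sig z)⁻¹ * sig z = 1 := inv_mul_cancel₀ hne
    rw [e1]
    calc sig (z + ω)
        = sig (z + ω) * (Complex.exp (-(η * z)) * Complex.exp (η * z)) * ((sig z)⁻¹ * sig z) := by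
          rw [e2, e3]; ring
      _ = (sig (z + ω) * Complex.exp (-(η * z)) * (sig z)⁻¹) * (Complex.exp (η * z) * sig z) := by
          ring
      _ = -Complex.exp (η * (ω / 2)) * (Complex.exp (η * z) * sig z) := by rw [h1]
      _ = -(Complex.exp (η * z) * Complex.exp (η * (ω / 2))) * sig z := by ring
  -- extend to all of ℂ by continuity
  have hcont1 : Continuous (fun z => sig (z + ω)) :=
    W.hsig_diff.continuous.comp (continuous_id.add continuous_const)
  have hcont2 : Continuous (fun z => -Complex.exp (η * (z + ω / 2)) * sig z) :=
    ((Complex.continuous_exp.comp (continuous_const.mul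
      (continuous_id.add continuous_const))).neg).mul W.hsig_diff.continuous
  have := Continuous.ext_on (lat_dense_compl (ω₁ := ω₁) (ω₂ := ω₂)) hcont1 hcont2 hoff
  intro z
  exact congrFun this z

omit W in
lemma qper_neg {η ω : ℂ} (hq : ∀ z, sig (z + ω) = -Complex.exp (η * (z + ω / 2)) * sig z) :
    ∀ z, sig (z - ω) = -Complex.exp (-(η * (z - ω / 2))) * sig z := by
  have key : ∀ (A : ℂ) (s : ℂ), -Complex.exp (-A) * (-Complex.exp A * s) = s := by
    intro A s
    have h : Complex.exp (-A) * Complex.exp A = 1 := by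
      rw [← Complex.exp_add]; simp
    linear_combination s * h
  intro z
  have h := hq (z - ω)
  rw [show z - ω + ω = z by ring] at h
  rw [h, show z - ω + ω / 2 = z - ω / 2 by ring]
  exact (key (η * (z - ω / 2)) (sig (z - ω))).symm

lemma WData.sig_qper_gen :
    ∃ η₁ η₂ : ℂ, (∀ z, sig (z + ω₁) = -Complex.exp (η₁ * (z + ω₁ / 2)) * sig z) ∧
      (∀ z, sig (z + ω₂) = -Complex.exp (η₂ * (z + ω₂ / 2)) * sig z) := by
  obtain ⟨η₁, h₁⟩ := W.eta_exists lat_mem_omega₁ (half_not_mem W.hω).1 W.hpe_per₁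
  obtain ⟨η₂, h₂⟩ := W.eta_exists lat_mem_omega₂ (half_not_mem W.hω).2 W.hpe_per₂
  exact ⟨η₁, η₂, h₁, h₂⟩

omit W in
lemma qper_int {η ω : ℂ} (hq : ∀ z, sig (z + ω) = -Complex.exp (η * (z + ω / 2)) * sig z) :
    ∀ n : ℤ, ∃ c κ : ℂ, c ≠ 0 ∧ ∀ z, sig (z + (n : ℂ) * ω) = c * Complex.exp (κ * z) * sig z := by
  intro n
  induction n using Int.induction_on with
  | zero => exact ⟨1, 0, one_ne_zero, fun z => by simp⟩
  | succ k ih =>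
      obtain ⟨c, κ, hc, hrel⟩ := ih
      refine ⟨-Complex.exp (η * ((k : ℂ) * ω + ω / 2)) * c, κ + η,
        by simp [hc, Complex.exp_ne_zero], fun z => ?_⟩
      push_cast at hrel ⊢
      have h1 := hq (z + (k : ℂ) * ω)
      rw [show z + (k : ℂ) * ω + ω = z + ((k : ℂ) + 1) * ω by ring] at h1
      rw [h1, hrel z]
      rw [show η * (z + (k : ℂ) * ω + ω / 2) = η * ((k : ℂ) * ω + ω / 2) + η * z by ring,
        Complex.exp_add, show (κ + η) * z = κ * z + η * z by ring, Complex.exp_add]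
      ring
  | pred k ih =>
      obtain ⟨c, κ, hc, hrel⟩ := ih
      refine ⟨-Complex.exp (η * ((k : ℂ) * ω + ω / 2)) * c, κ - η,
        by simp [hc, Complex.exp_ne_zero], fun z => ?_⟩
      push_cast at hrel ⊢
      have h1 := qper_neg hq (z + (-(k : ℂ)) * ω)
      rw [show z + -(k : ℂ) * ω - ω = z + (-(k : ℂ) - 1) * ω by ring] at h1
      rw [h1, hrel z]
      rw [show -(η * (z + -(k : ℂ) * ω - ω / 2)) = η * ((k : ℂ) * ω + ω / 2) + -(η * z) by ring,
        Complex.exp_add, show (κ - η) * z = κ * z + -(η * z) by ring, Complex.exp_add]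
      ring

lemma WData.sig_qper_lat :
    ∀ l ∈ LatticeOf ω₁ ω₂, ∃ c κ : ℂ, c ≠ 0 ∧
      ∀ z, sig (z + l) = c * Complex.exp (κ * z) * sig z := by
  obtain ⟨η₁, η₂, h₁, h₂⟩ := W.sig_qper_gen
  rintro l ⟨m, n, rfl⟩
  obtain ⟨c₁, κ₁, hc₁, hrel₁⟩ := qper_int h₁ m
  obtain ⟨c₂, κ₂, hc₂, hrel₂⟩ := qper_int h₂ n
  refine ⟨c₁ * c₂ * Complex.exp (κ₂ * ((m : ℂ) * ω₁)), κ₁ + κ₂,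
    by simp [hc₁, hc₂, Complex.exp_ne_zero], fun z => ?_⟩
  have h3 := hrel₂ (z + (m : ℂ) * ω₁)
  rw [show z + (m : ℂ) * ω₁ + (n : ℂ) * ω₂ = z + ((m : ℂ) * ω₁ + (n : ℂ) * ω₂) by ring] at h3
  rw [h3, hrel₁ z]
  rw [show κ₂ * (z + (m : ℂ) * ω₁) = κ₂ * ((m : ℂ) * ω₁) + κ₂ * z by ring, Complex.exp_add,
    show (κ₁ + κ₂) * z = κ₁ * z + κ₂ * z by ring, Complex.exp_add]
  ring

lemma WData.sig_deriv_lat : ∀ l ∈ LatticeOf ω₁ ω₂, deriv sig l ≠ 0 := by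
  intro l hl
  obtain ⟨c, κ, hc, hrel⟩ := W.sig_qper_lat l hl
  have h1 : HasDerivAt (fun z : ℂ => sig (z + l)) (deriv sig (0 + l) * 1) 0 :=
    HasDerivAt.comp (𝕜 := ℂ) 0 ((W.hsig_diff (0 + l)).hasDerivAt) ((hasDerivAt_id 0).add_const l)
  have h2 : HasDerivAt (fun z : ℂ => c * Complex.exp (κ * z) * sig z)
      (c * (Complex.exp (κ * 0) * κ) * sig 0 + c * Complex.exp (κ * 0) * 1) 0 := by
    have hexp : HasDerivAt (fun z : ℂ => Complex.exp (κ * z)) (Complex.exp (κ * 0) * κ) 0 :=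
      HasDerivAt.comp (𝕜 := ℂ) 0 (Complex.hasDerivAt_exp _)
        (by simpa using (hasDerivAt_id (0:ℂ)).const_mul κ)
    exact ((hexp.const_mul c).mul W.sig_deriv_zero)
  have hfun : (fun z : ℂ => sig (z + l)) = fun z : ℂ => c * Complex.exp (κ * z) * sig z :=
    funext hrel
  rw [hfun] at h1
  have h5 := h1.unique h2
  rw [zero_add, mul_one, W.sig0, mul_zero, zero_add, mul_one] at h5
  rw [h5]
  exact mul_ne_zero hc (Complex.exp_ne_zero _)

omit W in
lemma translate_countable (c : ℂ) : {u : ℂ | u - c ∈ LatticeOf ω₁ ω₂}.Countable := by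
  have : {u : ℂ | u - c ∈ LatticeOf ω₁ ω₂} = (fun u : ℂ => u - c) ⁻¹' (LatticeOf ω₁ ω₂) := rfl
  rw [this]
  exact (lat_countable).preimage (fun x y h => by simpa using h)

/-- The key three-term σ-identity, proved by Liouville's theorem. -/
lemma WData.key (a v b : ℂ) (ha : a ∉ LatticeOf ω₁ ω₂) (hv : v ∉ LatticeOf ω₁ ω₂)
    (hav : a - v ∉ LatticeOf ω₁ ω₂) :
    ∀ u : ℂ, u - a ∉ LatticeOf ω₁ ω₂ → u - v ∉ LatticeOf ω₁ ω₂ →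
    sig (u-v-a) * sig (v-a-b) * sig u * sig b - sig (v-u-b) * sig (u-a-b) * sig v * sig a
      = sig (u-a) * sig (v-b) * sig (a+b) * sig (u-v) := by
  classical
  obtain ⟨η₁, η₂, hq₁, hq₂⟩ := W.sig_qper_gen
  set N : ℂ → ℂ := fun u =>
    sig (u-v-a) * sig (v-a-b) * sig u * sig b - sig (v-u-b) * sig (u-a-b) * sig v * sig a
    with hNdef
  set D : ℂ → ℂ := fun u => sig (u-a) * sig (u-v) with hDdef
  -- differentiability
  have hNdiff : Differentiable ℂ N := by
    have d1 : Differentiable ℂ (fun u : ℂ => sig (u - v - a)) :=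
      W.hsig_diff.comp ((differentiable_id.sub_const v).sub_const a)
    have d2 : Differentiable ℂ (fun u : ℂ => sig (v - u - b)) :=
      W.hsig_diff.comp (((differentiable_const v).sub differentiable_id).sub_const b)
    have d3 : Differentiable ℂ (fun u : ℂ => sig (u - a - b)) :=
      W.hsig_diff.comp ((differentiable_id.sub_const a).sub_const b)
    exact (((d1.mul (differentiable_const _)).mul W.hsig_diff).mul
      (differentiable_const _)).sub
      (((d2.mul d3).mul (differentiable_const _)).mul (differentiable_const _))
  have hDdiff : Differentiable ℂ D :=
    (W.hsig_diff.comp (differentiable_id.sub_const a)).mul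
      (W.hsig_diff.comp (differentiable_id.sub_const v))
  -- quasi-periodicity with common factor
  have genfact : ∀ (ω η : ℂ), (∀ z, sig (z + ω) = -Complex.exp (η * (z + ω / 2)) * sig z) →
      (∀ u, N (u + ω) = Complex.exp (η * (2*u - v - a + ω)) * N u) ∧
      (∀ u, D (u + ω) = Complex.exp (η * (2*u - v - a + ω)) * D u) := by
    intro ω η hq
    constructor
    · intro u
      simp only [hNdef]
      rw [show u + ω - v - a = (u - v - a) + ω by ring,
        show v - (u + ω) - b = (v - u - b) - ω by ring,
        show u + ω - a - b = (u - a - b) + ω by ring,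
        hq (u - v - a), hq u, qper_neg hq (v - u - b), hq (u - a - b)]
      have hAB : Complex.exp (η * ((u - v - a) + ω / 2)) * Complex.exp (η * (u + ω / 2))
          = Complex.exp (η * (2*u - v - a + ω)) := by
        rw [← Complex.exp_add]; congr 1; ring
      have hCD : Complex.exp (-(η * ((v - u - b) - ω / 2))) *
          Complex.exp (η * ((u - a - b) + ω / 2))
          = Complex.exp (η * (2*u - v - a + ω)) := by
        rw [← Complex.exp_add]; congr 1; ring
      linear_combination (sig (u - v - a) * sig (v - a - b) * sig u * sig b) * hAB -
        (sig (v - u - b) * sig (u - a - b) * sig v * sig a) * hCD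
    · intro u
      simp only [hDdef]
      rw [show u + ω - a = (u - a) + ω by ring, show u + ω - v = (u - v) + ω by ring,
        hq (u - a), hq (u - v)]
      have hAB : Complex.exp (η * ((u - a) + ω / 2)) * Complex.exp (η * ((u - v) + ω / 2))
          = Complex.exp (η * (2*u - v - a + ω)) := by
        rw [← Complex.exp_add]; congr 1; ring
      linear_combination (sig (u - a) * sig (u - v)) * hAB
  obtain ⟨hN₁, hD₁⟩ := genfact ω₁ η₁ hq₁
  obtain ⟨hN₂, hD₂⟩ := genfact ω₂ η₂ hq₂
  -- zeros of N
  have hNa : N a = 0 := by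
    simp only [hNdef]
    rw [show a - v - a = -v by ring, show a - a - b = -b by ring, W.sig_odd v, W.sig_odd b]
    ring
  have hNv : N v = 0 := by
    simp only [hNdef]
    rw [show v - v - a = -a by ring, show v - v - b = -b by ring, W.sig_odd a, W.sig_odd b]
    ring
  have hNzprop := zero_prop (f := N)
    (fun z => ⟨Complex.exp (η₁ * (2*z - v - a + ω₁)), Complex.exp_ne_zero _, hN₁ z⟩)
    (fun z => ⟨Complex.exp (η₂ * (2*z - v - a + ω₂)), Complex.exp_ne_zero _, hN₂ z⟩)
  have hNz : ∀ u₀ : ℂ, (u₀ - a ∈ LatticeOf ω₁ ω₂ ∨ u₀ - v ∈ LatticeOf ω₁ ω₂) → N u₀ = 0 := by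
    rintro u₀ (h | h)
    · have := (hNzprop (u₀ - a) h a).2 hNa
      rwa [show a + (u₀ - a) = u₀ by ring] at this
    · have := (hNzprop (u₀ - v) h v).2 hNv
      rwa [show v + (u₀ - v) = u₀ by ring] at this
  -- zeros of D
  have hDz : ∀ u₀ : ℂ, (D u₀ = 0 ↔ (u₀ - a ∈ LatticeOf ω₁ ω₂ ∨ u₀ - v ∈ LatticeOf ω₁ ω₂)) := by
    intro u₀
    simp only [hDdef]
    rw [mul_eq_zero, W.hsig_zero, W.hsig_zero]
  -- derivative of D
  have hDd : ∀ u₀ : ℂ, HasDerivAt D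
      (deriv sig (u₀ - a) * 1 * sig (u₀ - v) + sig (u₀ - a) * (deriv sig (u₀ - v) * 1)) u₀ := by
    intro u₀
    have hd1 : HasDerivAt (fun u : ℂ => sig (u - a)) (deriv sig (u₀ - a) * 1) u₀ :=
      HasDerivAt.comp (𝕜 := ℂ) u₀ ((W.hsig_diff (u₀ - a)).hasDerivAt)
        ((hasDerivAt_id u₀).sub_const a)
    have hd2 : HasDerivAt (fun u : ℂ => sig (u - v)) (deriv sig (u₀ - v) * 1) u₀ :=
      HasDerivAt.comp (𝕜 := ℂ) u₀ ((W.hsig_diff (u₀ - v)).hasDerivAt)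
        ((hasDerivAt_id u₀).sub_const v)
    exact hd1.mul hd2
  have hDd_ne : ∀ u₀ : ℂ, (u₀ - a ∈ LatticeOf ω₁ ω₂ ∨ u₀ - v ∈ LatticeOf ω₁ ω₂) →
      deriv D u₀ ≠ 0 := by
    rintro u₀ (h | h)
    · have hnv : u₀ - v ∉ LatticeOf ω₁ ω₂ := by
        intro hc
        exact hav (by rw [show a - v = (u₀ - v) - (u₀ - a) by ring]; exact lat_sub hc h)
      rw [(hDd u₀).deriv, (W.hsig_zero _).2 h]
      simp only [mul_one, zero_mul, mul_zero, add_zero, zero_add]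
      exact mul_ne_zero (W.sig_deriv_lat _ h) (W.sig_ne hnv)
    · have hna : u₀ - a ∉ LatticeOf ω₁ ω₂ := by
        intro hc
        exact hav (by rw [show a - v = (u₀ - v) - (u₀ - a) by ring]; exact lat_sub h hc)
      rw [(hDd u₀).deriv, (W.hsig_zero _).2 h]
      simp only [mul_one, zero_mul, mul_zero, add_zero, zero_add]
      exact mul_ne_zero (W.sig_ne hna) (W.sig_deriv_lat _ h)
  -- the quotient function
  set p : ℂ → Prop := fun u => u - a ∈ LatticeOf ω₁ ω₂ ∨ u - v ∈ LatticeOf ω₁ ω₂ with hpdef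
  set G : ℂ → ℂ := fun u => if p u then deriv N u / deriv D u else N u / D u with hGdef
  have hDne_of_not : ∀ {u₀ : ℂ}, ¬ p u₀ → D u₀ ≠ 0 := by
    intro u₀ hp hD0
    exact hp ((hDz u₀).1 hD0)
  -- differentiability of G
  have hGdiff : Differentiable ℂ G := by
    intro u₀
    by_cases hp : p u₀
    · -- removable singularity via dslope
      have hNu₀ : N u₀ = 0 := hNz u₀ hp
      have hDu₀ : D u₀ = 0 := (hDz u₀).2 hp
      -- find a punctured ball avoiding p
      obtain ⟨ε, hε0, hεball⟩ : ∃ ε > 0, ∀ z : ℂ, dist z u₀ < ε → z ≠ u₀ → ¬ p z := by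
        rcases hp with h | h
        · have hnv : u₀ - v ∉ LatticeOf ω₁ ω₂ := by
            intro hc
            exact hav (by rw [show a - v = (u₀ - v) - (u₀ - a) by ring]; exact lat_sub hc h)
          obtain ⟨ε₁, hε₁0, hε₁⟩ := translate_isolated W.hω a u₀
          obtain ⟨ε₂, hε₂0, hε₂⟩ := translate_closed W.hω hnv
          refine ⟨min ε₁ ε₂, lt_min hε₁0 hε₂0, fun z hz hzne => ?_⟩
          rintro (hc | hc)
          · exact hzne (hε₁ z (lt_of_lt_of_le hz (min_le_left _ _)) hc h)
          · exact hε₂ z (lt_of_lt_of_le hz (min_le_right _ _)) hc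
        · have hna : u₀ - a ∉ LatticeOf ω₁ ω₂ := by
            intro hc
            exact hav (by rw [show a - v = (u₀ - v) - (u₀ - a) by ring]; exact lat_sub h hc)
          obtain ⟨ε₁, hε₁0, hε₁⟩ := translate_isolated W.hω v u₀
          obtain ⟨ε₂, hε₂0, hε₂⟩ := translate_closed W.hω hna
          refine ⟨min ε₁ ε₂, lt_min hε₁0 hε₂0, fun z hz hzne => ?_⟩
          rintro (hc | hc)
          · exact hε₂ z (lt_of_lt_of_le hz (min_le_right _ _)) hc
          · exact hzne (hε₁ z (lt_of_lt_of_le hz (min_le_left _ _)) hc h)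
      have hNds : Differentiable ℂ (dslope N u₀) := by
        rw [← differentiableOn_univ]
        exact (Complex.differentiableOn_dslope (Filter.univ_mem)).2 hNdiff.differentiableOn
      have hDds : Differentiable ℂ (dslope D u₀) := by
        rw [← differentiableOn_univ]
        exact (Complex.differentiableOn_dslope (Filter.univ_mem)).2 hDdiff.differentiableOn
      have hDds_ne : dslope D u₀ u₀ ≠ 0 := by
        rw [dslope_same]
        exact hDd_ne u₀ hp
      have hquot : DifferentiableAt ℂ (fun z => dslope N u₀ z / dslope D u₀ z) u₀ :=
        (hNds u₀).div (hDds u₀) hDds_ne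
      refine hquot.congr_of_eventuallyEq ?_
      filter_upwards [Metric.ball_mem_nhds u₀ hε0] with z hz
      by_cases hzu : z = u₀
      · subst hzu
        simp only [hGdef, if_pos hp, dslope_same]
      · have hpz : ¬ p z := hεball z (by simpa [Metric.mem_ball] using hz) hzu
        have hzne' : z - u₀ ≠ 0 := sub_ne_zero.2 hzu
        have hDzne : D z ≠ 0 := hDne_of_not hpz
        simp only [hGdef, if_neg hpz]
        rw [dslope_of_ne _ hzu, dslope_of_ne _ hzu, slope_def_field, slope_def_field,
          hNu₀, hDu₀, sub_zero, sub_zero, div_div_div_comm, div_self hzne', div_one]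
    · -- regular point
      obtain ⟨hna, hnv⟩ := not_or.1 hp
      obtain ⟨ε₁, hε₁0, hε₁⟩ := translate_closed W.hω (c := a) hna
      obtain ⟨ε₂, hε₂0, hε₂⟩ := translate_closed W.hω (c := v) hnv
      have hquot : DifferentiableAt ℂ (fun z => N z / D z) u₀ :=
        (hNdiff u₀).div (hDdiff u₀) (hDne_of_not hp)
      refine hquot.congr_of_eventuallyEq ?_
      filter_upwards [Metric.ball_mem_nhds u₀ (lt_min hε₁0 hε₂0)] with z hz
      have hz' : dist z u₀ < min ε₁ ε₂ := by simpa [Metric.mem_ball] using hz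
      have hpz : ¬ p z := by
        rintro (hc | hc)
        · exact hε₁ z (lt_of_lt_of_le hz' (min_le_left _ _)) hc
        · exact hε₂ z (lt_of_lt_of_le hz' (min_le_right _ _)) hc
      simp only [hGdef, if_neg hpz]
  -- periodicity of G
  have hGcont : Continuous G := hGdiff.continuous
  have hGgen : ∀ (ω η : ℂ), (∀ u, N (u + ω) = Complex.exp (η * (2*u - v - a + ω)) * N u) →
      (∀ u, D (u + ω) = Complex.exp (η * (2*u - v - a + ω)) * D u) →
      ∀ u, G (u + ω) = G u := by
    intro ω η hN hD
    have hdense : Dense {u : ℂ | p u ∨ p (u + ω)}ᶜ := by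
      apply Set.Countable.dense_compl ℂ
      have : {u : ℂ | p u ∨ p (u + ω)} ⊆
          {u : ℂ | u - a ∈ LatticeOf ω₁ ω₂} ∪ {u : ℂ | u - v ∈ LatticeOf ω₁ ω₂} ∪
          ({u : ℂ | u - (a - ω) ∈ LatticeOf ω₁ ω₂} ∪ {u : ℂ | u - (v - ω) ∈ LatticeOf ω₁ ω₂}) := by
        rintro u (h | h)
        · exact Or.inl (by exact h)
        · rcases h with h | h
          · exact Or.inr (Or.inl (by simpa [show u - (a - ω) = u + ω - a by ring] using h))
          · exact Or.inr (Or.inr (by simpa [show u - (v - ω) = u + ω - v by ring] using h))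
      exact Set.Countable.mono this
        (((translate_countable a).union (translate_countable v)).union
          ((translate_countable (a - ω)).union (translate_countable (v - ω))))
    have heq : Set.EqOn (fun u => G (u + ω)) G {u : ℂ | p u ∨ p (u + ω)}ᶜ := by
      intro u hu
      simp only [Set.mem_compl_iff, Set.mem_setOf_eq, not_or] at hu
      obtain ⟨hu1, hu2⟩ := hu
      simp only [hGdef, if_neg hu1, if_neg hu2]
      rw [hN u, hD u]
      exact mul_div_mul_left _ _ (Complex.exp_ne_zero _)
    have := Continuous.ext_on hdense (hGcont.comp (continuous_id.add continuous_const)) hGcont heq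
    intro u
    exact congrFun this u
  have hGper : ∀ l ∈ LatticeOf ω₁ ω₂, ∀ u, G (u + l) = G u :=
    per_lattice (hGgen ω₁ η₁ hN₁ hD₁) (hGgen ω₂ η₂ hN₂ hD₂)
  -- Liouville
  have hGconst := periodic_entire_const W.hω hGdiff hGper
  -- value at a + v
  have hpav : ¬ p (a + v) := by
    rintro (h | h)
    · exact hv (by simpa [show a + v - a = v by ring] using h)
    · exact ha (by simpa [show a + v - v = a by ring] using h)
  have hGav : G (a + v) = sig (a+b) * sig (v-b) := by
    simp only [hGdef, if_neg hpav]
    have hNav : N (a + v) = sig (a+b) * sig (v-b) * sig v * sig a := by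
      simp only [hNdef]
      rw [show a + v - v - a = 0 by ring, W.sig0,
        show v - (a + v) - b = -(a+b) by ring, W.sig_odd (a+b),
        show a + v - a - b = v - b by ring]
      ring
    have hDav : D (a + v) = sig v * sig a := by
      simp only [hDdef]
      rw [show a + v - a = v by ring, show a + v - v = a by ring]
    rw [hNav, hDav,
      show sig (a+b) * sig (v-b) * sig v * sig a
        = (sig (a+b) * sig (v-b)) * (sig v * sig a) by ring,
      mul_div_assoc, div_self (mul_ne_zero (W.sig_ne hv) (W.sig_ne ha)), mul_one]
  -- conclusion
  intro u hua huv
  have hpu : ¬ p u := by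
    rintro (h | h)
    · exact hua h
    · exact huv h
  have hGu : G u = N u / D u := by simp only [hGdef, if_neg hpu]
  have : N u / D u = sig (a+b) * sig (v-b) := by
    rw [← hGu, hGconst u (a + v), hGav]
  have hNu : N u = sig (a+b) * sig (v-b) * D u := by
    rw [← this]
    field_simp [hDne_of_not hpu]
  simp only [hNdef, hDdef] at hNu
  linear_combination hNu

/-- The statement, under the extra genericity assumption `a - v ∉ Λ`. -/
lemma WData.main_generic (a b u v : ℂ)
    (ha : a ∉ LatticeOf ω₁ ω₂) (hb : b ∉ LatticeOf ω₁ ω₂) (hab : a + b ∉ LatticeOf ω₁ ω₂)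
    (hu : u ∉ LatticeOf ω₁ ω₂) (hv : v ∉ LatticeOf ω₁ ω₂) (huv : u - v ∉ LatticeOf ω₁ ω₂)
    (hua : u - a ∉ LatticeOf ω₁ ω₂) (hav : a - v ∉ LatticeOf ω₁ ω₂) :
    wK sig zet a (u - v) * Complex.exp (-(zet (u - v) - zet u + zet v) * a)
          * wK sig zet (a + b) v
        + wK sig zet b (v - u) * Complex.exp (-(zet (v - u) - zet v + zet u) * b)
            * wK sig zet (a + b) u =
      wK sig zet a u * wK sig zet b v := by
  have key := W.key a v b ha hv hav u hua huv
  set X : ℂ := Complex.exp (zet u * a + zet v * b) with hX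
  have hodd : sig (v - u) = -sig (u - v) := by
    rw [show v - u = -(u - v) by ring, W.sig_odd]
  have hsu := W.sig_ne hu
  have hsv := W.sig_ne hv
  have hsa := W.sig_ne ha
  have hsb := W.sig_ne hb
  have hsab := W.sig_ne hab
  have hsuv := W.sig_ne huv
  have he1 : Complex.exp (zet (u-v) * a) * Complex.exp (-(zet (u-v) - zet u + zet v) * a) *
      Complex.exp (zet v * (a+b)) = X := by
    rw [hX, ← Complex.exp_add, ← Complex.exp_add]; congr 1; ring
  have he2 : Complex.exp (zet (v-u) * b) * Complex.exp (-(zet (v-u) - zet v + zet u) * b) *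
      Complex.exp (zet u * (a+b)) = X := by
    rw [hX, ← Complex.exp_add, ← Complex.exp_add]; congr 1; ring
  have he3 : Complex.exp (zet u * a) * Complex.exp (zet v * b) = X := by
    rw [hX, ← Complex.exp_add]
  have T1 : wK sig zet a (u - v) * Complex.exp (-(zet (u - v) - zet u + zet v) * a)
      * wK sig zet (a + b) v
      = sig (u-v-a) * sig (v-a-b) * X / (sig (u-v) * sig a * sig v * sig (a+b)) := by
    simp only [wK]
    rw [show v - (a + b) = v - a - b by ring, ← he1]
    ring
  have T2 : wK sig zet b (v - u) * Complex.exp (-(zet (v - u) - zet v + zet u) * b)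
      * wK sig zet (a + b) u
      = sig (v-u-b) * sig (u-a-b) * X / (-sig (u-v) * sig b * sig u * sig (a+b)) := by
    simp only [wK]
    rw [show u - (a + b) = u - a - b by ring, ← he2, hodd]
    ring
  have TR : wK sig zet a u * wK sig zet b v
      = sig (u-a) * sig (v-b) * X / (sig u * sig a * sig v * sig b) := by
    simp only [wK]
    rw [← he3]
    ring
  rw [T1, T2, TR]
  have hd1 : sig (u-v) * sig a * sig v * sig (a+b) ≠ 0 := by
    exact mul_ne_zero (mul_ne_zero (mul_ne_zero hsuv hsa) hsv) hsab
  have hd2 : -sig (u-v) * sig b * sig u * sig (a+b) ≠ 0 := by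
    exact mul_ne_zero (mul_ne_zero (mul_ne_zero (neg_ne_zero.2 hsuv) hsb) hsu) hsab
  have hd3 : sig u * sig a * sig v * sig b ≠ 0 := by
    exact mul_ne_zero (mul_ne_zero (mul_ne_zero hsu hsa) hsv) hsb
  rw [div_add_div _ _ hd1 hd2, div_eq_div_iff (mul_ne_zero hd1 hd2) hd3]
  linear_combination (-X * sig (u-v) * sig (a+b) * sig a * sig b * sig u * sig v) * key

lemma WData.main (a b u v : ℂ)
    (ha : a ∉ LatticeOf ω₁ ω₂) (hb : b ∉ LatticeOf ω₁ ω₂) (hab : a + b ∉ LatticeOf ω₁ ω₂)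
    (hu : u ∉ LatticeOf ω₁ ω₂) (hv : v ∉ LatticeOf ω₁ ω₂) (huv : u - v ∉ LatticeOf ω₁ ω₂)
    (hua : u - a ∉ LatticeOf ω₁ ω₂) :
    wK sig zet a (u - v) * Complex.exp (-(zet (u - v) - zet u + zet v) * a)
          * wK sig zet (a + b) v
        + wK sig zet b (v - u) * Complex.exp (-(zet (v - u) - zet v + zet u) * b)
            * wK sig zet (a + b) u =
      wK sig zet a u * wK sig zet b v := by
  classical
  set f : ℂ → ℂ := fun t =>
    wK sig zet (a + t) (u - v) * Complex.exp (-(zet (u - v) - zet u + zet v) * (a + t))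
          * wK sig zet (a + t + b) v
        + wK sig zet b (v - u) * Complex.exp (-(zet (v - u) - zet v + zet u) * b)
            * wK sig zet (a + t + b) u
        - wK sig zet (a + t) u * wK sig zet b v with hfdef
  set T : Set ℂ := {t | a + t ∉ LatticeOf ω₁ ω₂ ∧ a + t + b ∉ LatticeOf ω₁ ω₂ ∧
    u - (a + t) ∉ LatticeOf ω₁ ω₂ ∧ (a + t) - v ∉ LatticeOf ω₁ ω₂} with hTdef
  -- f vanishes on T
  have hT0 : ∀ t ∈ T, f t = 0 := by
    rintro t ⟨h1, h2, h3, h4⟩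
    have := W.main_generic (a + t) b u v h1 hb h2 hu hv huv h3 h4
    simp only [hfdef]
    rw [sub_eq_zero]
    exact this
  -- T is dense
  have hTdense : Dense T := by
    have hsub : Tᶜ ⊆ {t : ℂ | t - (-a) ∈ LatticeOf ω₁ ω₂} ∪
        {t : ℂ | t - (-a - b) ∈ LatticeOf ω₁ ω₂} ∪
        ({t : ℂ | t - (u - a) ∈ LatticeOf ω₁ ω₂} ∪
         {t : ℂ | t - (v - a) ∈ LatticeOf ω₁ ω₂}) := by
      intro t ht
      simp only [hTdef, Set.mem_compl_iff, Set.mem_setOf_eq, not_and_or, not_not] at ht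
      rcases ht with h | h | h | h
      · refine Or.inl (Or.inl ?_)
        show t - -a ∈ LatticeOf ω₁ ω₂
        rw [show t - -a = a + t by ring]; exact h
      · exact Or.inl (Or.inr (by simpa [show t - (-a - b) = a + t + b by ring] using h))
      · refine Or.inr (Or.inl ?_)
        have : -(t - (u - a)) ∈ LatticeOf ω₁ ω₂ := by
          simpa [show -(t - (u - a)) = u - (a + t) by ring] using h
        exact lat_neg_iff.1 this
      · exact Or.inr (Or.inr (by simpa [show t - (v - a) = a + t - v by ring] using h))
    have hcnt : (Tᶜ).Countable :=
      Set.Countable.mono hsub (((translate_countable _).union (translate_countable _)).union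
        ((translate_countable _).union (translate_countable _)))
    have := hcnt.dense_compl ℂ
    rwa [compl_compl] at this
  have hneBot : (nhdsWithin (0:ℂ) T).NeBot :=
    mem_closure_iff_nhdsWithin_neBot.1 (by rw [hTdense.closure_eq]; trivial)
  -- continuity of f at 0
  have hwkc : ∀ (u' x₀ : ℂ), sig u' * sig x₀ ≠ 0 →
      ContinuousAt (fun x => wK sig zet x u') x₀ := by
    intro u' x₀ hne
    simp only [wK]
    exact ContinuousAt.div
      (((W.hsig_diff.continuous.comp (continuous_const.sub continuous_id)).mul
        (Complex.continuous_exp.comp (continuous_const.mul continuous_id))).continuousAt)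
      ((continuous_const.mul W.hsig_diff.continuous).continuousAt) hne
  have hsu := W.sig_ne hu
  have hsv := W.sig_ne hv
  have hsa := W.sig_ne ha
  have hsb := W.sig_ne hb
  have hsab := W.sig_ne hab
  have hsuv := W.sig_ne huv
  have hsvu : sig (v - u) ≠ 0 := by
    rw [show v - u = -(u - v) by ring, W.sig_odd]
    exact neg_ne_zero.2 hsuv
  have hadd : ContinuousAt (fun t : ℂ => a + t) 0 :=
    (continuous_const.add continuous_id).continuousAt
  have haddb : ContinuousAt (fun t : ℂ => a + t + b) 0 :=
    ((continuous_const.add continuous_id).add continuous_const).continuousAt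
  have hc1 : ContinuousAt (fun t : ℂ => wK sig zet (a + t) (u - v)) 0 := by
    have h := hwkc (u - v) (a + 0) (by rw [add_zero]; exact mul_ne_zero hsuv hsa)
    exact h.comp hadd
  have hc2 : ContinuousAt (fun t : ℂ => wK sig zet (a + t + b) v) 0 := by
    have h := hwkc v (a + 0 + b) (by rw [add_zero]; exact mul_ne_zero hsv hsab)
    exact ContinuousAt.comp (x := (0:ℂ)) (g := fun x => wK sig zet x v)
      (f := fun t : ℂ => a + t + b) h haddb
  have hc3 : ContinuousAt (fun t : ℂ => wK sig zet (a + t + b) u) 0 := by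
    have h := hwkc u (a + 0 + b) (by rw [add_zero]; exact mul_ne_zero hsu hsab)
    exact ContinuousAt.comp (x := (0:ℂ)) (g := fun x => wK sig zet x u)
      (f := fun t : ℂ => a + t + b) h haddb
  have hc4 : ContinuousAt (fun t : ℂ => wK sig zet (a + t) u) 0 := by
    have h := hwkc u (a + 0) (by rw [add_zero]; exact mul_ne_zero hsu hsa)
    exact h.comp hadd
  have hcexp : ContinuousAt
      (fun t : ℂ => Complex.exp (-(zet (u - v) - zet u + zet v) * (a + t))) 0 :=
    (Complex.continuous_exp.comp (continuous_const.mul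
      (continuous_const.add continuous_id))).continuousAt
  have hcont : ContinuousAt f 0 := by
    simp only [hfdef]
    exact (((hc1.mul hcexp).mul hc2).add ((continuousAt_const.mul continuousAt_const).mul hc3)).sub
      (hc4.mul continuousAt_const)
  -- conclude f 0 = 0
  have hlim1 : Filter.Tendsto f (nhdsWithin 0 T) (nhds (f 0)) :=
    hcont.continuousWithinAt.tendsto
  have hlim2 : Filter.Tendsto f (nhdsWithin 0 T) (nhds 0) := by
    refine Filter.Tendsto.congr' ?_ tendsto_const_nhds
    filter_upwards [eventually_mem_nhdsWithin] with t ht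
    exact (hT0 t ht).symm
  have hf0 : f 0 = 0 := tendsto_nhds_unique hlim1 hlim2
  simp only [hfdef, add_zero] at hf0
  rw [sub_eq_zero] at hf0
  exact hf0

end Main
end WP

/-- The three-term identity
`w(a;u−v) e^{−(ζ(u−v)−ζ(u)+ζ(v))a} w(a+b;v) + w(b;v−u) e^{−(ζ(v−u)−ζ(v)+ζ(u))b} w(a+b;u)
  = w(a;u) w(b;v)`. -/
theorem statement15
    (ω₁ ω₂ : ℂ) (hω : LinearIndependent ℝ ![ω₁, ω₂])
    (sig zet pe : ℂ → ℂ)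
    -- `pe = ℘` is the Weierstrass ℘-function of `Λ`: holomorphic off `Λ`,
    -- `Λ`-periodic, with `℘(z) − 1/z² → 0` as `z → 0`.
    (hpe_diff : DifferentiableOn ℂ pe (LatticeOf ω₁ ω₂)ᶜ)
    (hpe_per₁ : ∀ z : ℂ, pe (z + ω₁) = pe z)
    (hpe_per₂ : ∀ z : ℂ, pe (z + ω₂) = pe z)
    (hpe_zero : Filter.Tendsto (fun z : ℂ => pe z - 1 / z ^ 2)
      (nhdsWithin 0 {(0:ℂ)}ᶜ) (nhds 0))
    -- `zet = ζ` is the Weierstrass zeta function: `ζ′ = −℘`, `ζ(z) − 1/z → 0`.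
    (hzet_deriv : ∀ z ∉ LatticeOf ω₁ ω₂, HasDerivAt zet (-pe z) z)
    (hzet_zero : Filter.Tendsto (fun z : ℂ => zet z - 1 / z)
      (nhdsWithin 0 {(0:ℂ)}ᶜ) (nhds 0))
    -- `sig = σ` is the Weierstrass sigma function: entire, vanishing exactly on
    -- `Λ`, with `σ′/σ = ζ` off `Λ` and `σ(z)/z → 1` as `z → 0`.
    (hsig_diff : Differentiable ℂ sig)
    (hsig_zero : ∀ z : ℂ, sig z = 0 ↔ z ∈ LatticeOf ω₁ ω₂)
    (hsig_deriv : ∀ z ∉ LatticeOf ω₁ ω₂, HasDerivAt sig (zet z * sig z) z)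
    (hsig_one : Filter.Tendsto (fun z : ℂ => sig z / z)
      (nhdsWithin 0 {(0:ℂ)}ᶜ) (nhds 1))
    (a b u v : ℂ)
    (ha : a ∉ LatticeOf ω₁ ω₂) (hb : b ∉ LatticeOf ω₁ ω₂)
    (hab : a + b ∉ LatticeOf ω₁ ω₂) (hu : u ∉ LatticeOf ω₁ ω₂)
    (hv : v ∉ LatticeOf ω₁ ω₂) (huv : u - v ∉ LatticeOf ω₁ ω₂)
    (hua : u - a ∉ LatticeOf ω₁ ω₂) (hvb : v - b ∉ LatticeOf ω₁ ω₂)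
    (huva : u - v - a ∉ LatticeOf ω₁ ω₂) (hvub : v - u - b ∉ LatticeOf ω₁ ω₂)
    (huab : u - a - b ∉ LatticeOf ω₁ ω₂) (hvab : v - a - b ∉ LatticeOf ω₁ ω₂) :
    wK sig zet a (u - v) * Complex.exp (-(zet (u - v) - zet u + zet v) * a)
          * wK sig zet (a + b) v
        + wK sig zet b (v - u) * Complex.exp (-(zet (v - u) - zet v + zet u) * b)
            * wK sig zet (a + b) u =
      wK sig zet a u * wK sig zet b v := by
  exact WP.WData.main
    ⟨hω, hpe_diff, hpe_per₁, hpe_per₂, hpe_zero, hzet_deriv, hzet_zero,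
      hsig_diff, hsig_zero, hsig_deriv, hsig_one⟩
    a b u v ha hb hab hu hv huv hua

end
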